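/- Let L be a locally connected complete lattice, and let 𝒮(L) be the poset of separated sets of connected elements, ordered by S₁ ≤ S₂ iff every element of S₁ lies below some element of S₂. Then the map ν : 𝒮(L) → L sending S to ⋁S is an order isomorphism. -/
import Mathlib


variable {L : Type*} [CompleteLattice L]

def Separated (S : Set L) : Prop :=
  (⊥ : L) ∉ S ∧ ∀ s ∈ S, ∀ t ∈ S, s ≠ t → s ⊓ t = ⊥

def Connected (a : L) : Prop :=
  ∀ S : Set L, Separated S → a ≤ sSup S → ∃ s ∈ S, a ≤ s

def SepConn (S : Set L) : Prop := Separated S ∧ ∀ s ∈ S, Connected s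

def SLe (S T : Set L) : Prop := ∀ s ∈ S, ∃ t ∈ T, s ≤ t

lemma conn_ne_bot {a : L} (h : Connected a) : a ≠ ⊥ := by
  intro hb
  obtain ⟨s, hs, -⟩ := h ∅ ⟨by simp, by simp⟩ (by simp [hb])
  exact hs

lemma sup_conn {C : Set L} (hC : C.Nonempty) (hc : ∀ c ∈ C, Connected c)
    (hov : ∀ c ∈ C, ∀ d ∈ C, c ⊓ d ≠ ⊥) : Connected (sSup C) := by
  intro S hS hle
  obtain ⟨c₀, hc₀⟩ := hC
  obtain ⟨s₀, hs₀, hcs₀⟩ := hc c₀ hc₀ S hS ((le_sSup hc₀).trans hle)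
  refine ⟨s₀, hs₀, sSup_le fun c hcC => ?_⟩
  obtain ⟨s, hs, hcs⟩ := hc c hcC S hS ((le_sSup hcC).trans hle)
  rcases eq_or_ne s s₀ with rfl | hne
  · exact hcs
  · exfalso
    apply hov c hcC c₀ hc₀
    have h1 : c ⊓ c₀ ≤ s ⊓ s₀ := inf_le_inf hcs hcs₀
    rw [hS.2 s hs s₀ hs₀ hne] at h1
    exact le_bot_iff.mp h1

lemma conn_le_of_le_sSup {a : L} {S : Set L} (ha : Connected a)
    (hS : Separated S) (h : a ≤ sSup S) : ∃ s ∈ S, a ≤ s := ha S hS h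

theorem nu_is_order_iso
    (hlc : ∀ x : L, ∃ C : Set L, (∀ c ∈ C, Connected c) ∧ x = sSup C) :
    (∀ S T : Set L, SepConn S → SepConn T → sSup S = sSup T → S = T) ∧
    (∀ x : L, ∃ S : Set L, SepConn S ∧ sSup S = x) ∧
    (∀ S T : Set L, SepConn S → SepConn T → (SLe S T ↔ sSup S ≤ sSup T)) := by
  refine ⟨?_, ?_, ?_⟩
  · -- injectivity
    intro S T hS hT heq
    have main : ∀ S T : Set L, SepConn S → SepConn T → sSup S = sSup T →
        S ⊆ T := by
      intro S T hS hT heq s hsS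
      obtain ⟨t, htT, hst⟩ := (hS.2 s hsS) T hT.1 (heq ▸ le_sSup hsS)
      obtain ⟨s', hs'S, hts'⟩ := (hT.2 t htT) S hS.1 (heq ▸ le_sSup htT)
      have hss' : s ≤ s' := hst.trans hts'
      have : s = s' := by
        by_contra hne
        have := hS.1.2 s hsS s' hs'S hne
        rw [inf_eq_left.mpr hss'] at this
        exact conn_ne_bot (hS.2 s hsS) this
      subst this
      have : s = t := le_antisymm hst hts'
      exact this ▸ htT
    exact Set.Subset.antisymm (main S T hS hT heq) (main T S hT hS heq.symm)
  · -- surjectivity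
    intro x
    set S : Set L := {y | Connected y ∧ y ≤ x ∧
      ∀ z, Connected z → z ≤ x → y ≤ z → z = y} with hSdef
    have hsep : Separated S := by
      constructor
      · intro hb
        exact conn_ne_bot hb.1 rfl
      · intro y hy y' hy' hne
        by_contra hbot
        have hconn : Connected (sSup {y, y'}) := by
          apply sup_conn ⟨y, by simp⟩
          · rintro c (rfl | rfl)
            exacts [hy.1, hy'.1]
          · rintro c (rfl | rfl) d (rfl | rfl)
            · simpa using conn_ne_bot hy.1
            · exact hbot
            · rw [inf_comm]; exact hbot
            · simpa using conn_ne_bot hy'.1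
        have hlex : sSup {y, y'} ≤ x := by
          apply sSup_le; rintro c (rfl | rfl)
          exacts [hy.2.1, hy'.2.1]
        have h1 := hy.2.2 _ hconn hlex (le_sSup (by simp))
        have h2 := hy'.2.2 _ hconn hlex (le_sSup (by simp))
        exact hne (h1.symm.trans h2)
    refine ⟨S, ⟨hsep, fun s hs => hs.1⟩, ?_⟩
    apply le_antisymm (sSup_le fun y hy => hy.2.1)
    obtain ⟨C, hCconn, hCx⟩ := hlc x
    rw [hCx]
    apply sSup_le
    intro c hcC
    have hcx : c ≤ x := hCx ▸ le_sSup hcC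
    -- Zorn to find a maximal connected element above c below x
    obtain ⟨m, hcm, hmmem, hmmax⟩ :=
      zorn_le_nonempty₀ {z : L | Connected z ∧ c ≤ z ∧ z ≤ x}
        (fun ch hchsub hchain y hych => by
          refine ⟨sSup ch, ⟨?_, ?_, ?_⟩, fun z hz => le_sSup hz⟩
          · apply sup_conn ⟨y, hych⟩ (fun z hz => (hchsub hz).1)
            intro a ha b hb
            rcases hchain.total ha hb with hab | hba
            · rw [inf_eq_left.mpr hab]; exact conn_ne_bot (hchsub ha).1
            · rw [inf_eq_right.mpr hba]; exact conn_ne_bot (hchsub hb).1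
          · exact (hchsub hych).2.1.trans (le_sSup hych)
          · exact sSup_le fun z hz => (hchsub hz).2.2)
        c ⟨hCconn c hcC, le_rfl, hcx⟩
    have : m ∈ S := ⟨hmmem.1, hmmem.2.2, fun z hz hzx hmz =>
      (hmmax ⟨hz, hmmem.2.1.trans hmz, hzx⟩ hmz).antisymm hmz⟩
    exact hcm.trans (le_sSup this)
  · -- order embedding
    intro S T hS hT
    constructor
    · intro h
      apply sSup_le
      intro s hsS
      obtain ⟨t, htT, hst⟩ := h s hsS
      exact hst.trans (le_sSup htT)
    · intro h s hsS
      exact (hS.2 s hsS) T hT.1 ((le_sSup hsS).trans h)
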